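/- arXiv:2505.10308 — 2 statements merged into one kernel-verified Lean document; each statement's English description precedes it below -/
import Mathlib

section
/- Let A = [a_{ij}] be a 2×(m+1) matrix with entries in {±1,…,±n} whose columns are distinct, and suppose A contains an anti-circuit, i.e., there exist distinct columns j₁,…,j_p such that a_{2,j_α} = −a_{1,j_{α+1}} for 1 ≤ α ≤ p−1 and a_{2,j_p} = −a_{1,j₁}. Then A is invalid: there exist b = (b₁,b₂) ∈ ℝ² nonzero and a convex combination of the columns of the induced matrix M(A,b) equal to the zero vector in ℝⁿ. (In fact one may take b = (1,1) and coefficients 1/p on columns j₁,…,j_p.) -/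
/-- The vector in `ℝⁿ` corresponding to an entry `a = s·I` with `s ∈ {±1}`,
`I ∈ {1,…,n}`: the signed standard basis vector `s • e_I`. -/
def entryVec (n : ℕ) (a : ℤ) : EuclideanSpace ℝ (Fin n) :=
  WithLp.toLp 2 (fun i => if ((i : ℕ) : ℤ) + 1 = a then 1 else if ((i : ℕ) : ℤ) + 1 = -a then -1 else 0)

/-- The `j`-th column of the induced matrix `M(A,b)` of a `2 × (m+1)` matrix `A` with
entries in `{±1,…,±n}` and `b ∈ ℝ²`. -/
noncomputable def inducedCol (n m : ℕ) (A : Fin 2 → Fin (m + 1) → ℤ) (b : Fin 2 → ℝ) :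
    Fin (m + 1) → EuclideanSpace ℝ (Fin n) :=
  fun j => b 0 • entryVec n (A 0 j) + b 1 • entryVec n (A 1 j)

/-- `A` is valid if for every nonzero `b ∈ ℝ²` the convex hull of the columns of the
induced matrix `M(A,b)` does not contain the origin. -/
def IsValid (n m : ℕ) (A : Fin 2 → Fin (m + 1) → ℤ) : Prop :=
  ∀ b : Fin 2 → ℝ, b ≠ 0 →
    (0 : EuclideanSpace ℝ (Fin n)) ∉ convexHull ℝ (Set.range (inducedCol n m A b))

/-- A circuit in a `k × (m+1)` matrix: distinct rows `i₀, i₁` and distinct columns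
`j₁,…,j_p` with `a_{i₁,j_α} = a_{i₀,j_{α+1}}` cyclically. -/
def HasCircuit {k m : ℕ} (A : Fin k → Fin (m + 1) → ℤ) : Prop :=
  ∃ i₀ i₁ : Fin k, i₀ ≠ i₁ ∧ ∃ p : ℕ, ∃ j : Fin (p + 1) → Fin (m + 1),
    Function.Injective j ∧ ∀ α, A i₁ (j α) = A i₀ (j (α + 1))

/-- An anti-circuit: as a circuit, but with `a_{i₁,j_α} = −a_{i₀,j_{α+1}}` cyclically. -/
def HasAntiCircuit {k m : ℕ} (A : Fin k → Fin (m + 1) → ℤ) : Prop :=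
  ∃ i₀ i₁ : Fin k, i₀ ≠ i₁ ∧ ∃ p : ℕ, ∃ j : Fin (p + 1) → Fin (m + 1),
    Function.Injective j ∧ ∀ α, A i₁ (j α) = -(A i₀ (j (α + 1)))

lemma entryVec_neg (n : ℕ) (a : ℤ) : entryVec n (-a) = -entryVec n a := by
  ext i
  have hr : (-entryVec n a) i = -(entryVec n a i) := rfl
  rw [hr]
  simp only [entryVec, PiLp.toLp_apply, neg_neg]
  have hpos : (0 : ℤ) < ((i : ℕ) : ℤ) + 1 := by positivity
  split_ifs <;> first | omega | norm_num

/-- a `2 × (m+1)` matrix with entries in `{±1,…,±n}`, distinct columns,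
and containing an anti-circuit (in rows `1, 2`) is invalid: for some nonzero `b ∈ ℝ²`
the origin is a convex combination of the columns of `M(A,b)`. -/
theorem stmt9 (n m : ℕ) (A : Fin 2 → Fin (m + 1) → ℤ)
    (hA : ∀ i j, 1 ≤ |A i j| ∧ |A i j| ≤ (n : ℤ))
    (hcol : Function.Injective (fun j => fun i => A i j))
    (hanti : ∃ p : ℕ, ∃ j : Fin (p + 1) → Fin (m + 1),
      Function.Injective j ∧ ∀ α, A 1 (j α) = -(A 0 (j (α + 1)))) :
    ∃ b : Fin 2 → ℝ, b ≠ 0 ∧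
      (0 : EuclideanSpace ℝ (Fin n)) ∈ convexHull ℝ (Set.range (inducedCol n m A b)) := by
  obtain ⟨p, j, hj, hcyc⟩ := hanti
  set b : Fin 2 → ℝ := ![1, 1] with hb
  refine ⟨b, ?_, ?_⟩
  · intro h
    have : b 0 = 0 := by rw [h]; rfl
    simp [hb] at this
  · -- The sum of the columns over the anti-circuit is zero.
    have hsum : ∑ α : Fin (p + 1), inducedCol n m A b (j α) = 0 := by
      have hb0 : b 0 = 1 := rfl
      have hb1 : b 1 = 1 := rfl
      simp only [inducedCol, hb0, hb1, one_smul]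
      rw [Finset.sum_add_distrib]
      have h2 : ∑ α : Fin (p + 1), entryVec n (A 1 (j α))
          = -∑ α : Fin (p + 1), entryVec n (A 0 (j α)) := by
        calc ∑ α : Fin (p + 1), entryVec n (A 1 (j α))
            = ∑ α : Fin (p + 1), -entryVec n (A 0 (j (α + 1))) := by
              refine Finset.sum_congr rfl fun α _ => ?_
              rw [hcyc α, entryVec_neg]
          _ = -∑ α : Fin (p + 1), entryVec n (A 0 (j (α + 1))) := by
              rw [Finset.sum_neg_distrib]
          _ = -∑ α : Fin (p + 1), entryVec n (A 0 (j α)) := by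
              rw [Fintype.sum_equiv (Equiv.addRight (1 : Fin (p + 1)))
                (fun α => entryVec n (A 0 (j (α + 1))))
                (fun α => entryVec n (A 0 (j α))) (fun α => rfl)]
      rw [h2, add_neg_cancel]
    have := Finset.centerMass_mem_convexHull (Finset.univ : Finset (Fin (p + 1)))
      (w := fun _ => (1 : ℝ)) (z := fun α => inducedCol n m A b (j α))
      (fun _ _ => zero_le_one)
      (by simp [Finset.card_univ]; positivity)
      (fun α _ => Set.mem_range_self (j α))
    simp only [Finset.centerMass, one_smul, hsum, smul_zero] at this
    exact this
end

section
/- Let A be a 2×(m+1) matrix with entries in {±1,…,±n} and distinct columns. If A contains a circuit, i.e., distinct columns j₁,…,j_p with a_{2,j_α} = a_{1,j_{α+1}} for 1 ≤ α ≤ p−1 and a_{2,j_p} = a_{1,j₁}, then A is invalid: with b = (1,−1), the origin lies in the convex hull of the columns of the induced matrix M(A,b). -/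
/-- a `2 × (m+1)` matrix with entries in `{±1,…,±n}`, distinct columns,
and containing a circuit (in rows `1, 2`) is invalid: with `b = (1,−1)`, the origin
lies in the convex hull of the columns of `M(A,b)`. -/
theorem stmt10 (n m : ℕ) (A : Fin 2 → Fin (m + 1) → ℤ)
    (hA : ∀ i j, 1 ≤ |A i j| ∧ |A i j| ≤ (n : ℤ))
    (hcol : Function.Injective (fun j => fun i => A i j))
    (hcirc : ∃ p : ℕ, ∃ j : Fin (p + 1) → Fin (m + 1),
      Function.Injective j ∧ ∀ α, A 1 (j α) = A 0 (j (α + 1))) :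
    (0 : EuclideanSpace ℝ (Fin n)) ∈
      convexHull ℝ (Set.range (inducedCol n m A ![1, -1])) := by
  obtain ⟨p, j, hj, hc⟩ := hcirc
  have key : ∑ α : Fin (p + 1), inducedCol n m A ![1, -1] (j α) = 0 := by
    have h1 : ∀ α, inducedCol n m A ![1, -1] (j α)
        = entryVec n (A 0 (j α)) - entryVec n (A 0 (j (α + 1))) := by
      intro α
      simp [inducedCol, ← hc α, sub_eq_add_neg]
    rw [Finset.sum_congr rfl fun α _ => h1 α, Finset.sum_sub_distrib, sub_eq_zero]
    exact (Fintype.sum_equiv (Equiv.addRight 1) _ _ (fun α => rfl)).symm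
  have h := Finset.centerMass_mem_convexHull (t := (Finset.univ : Finset (Fin (p + 1))))
    (w := fun _ => (1 : ℝ)) (z := fun α => inducedCol n m A ![1, -1] (j α))
    (fun _ _ => zero_le_one) (by simp; positivity) (fun α _ => Set.mem_range_self _)
  rwa [Finset.centerMass, show (∑ α : Fin (p + 1), (1 : ℝ) • inducedCol n m A ![1, -1] (j α)) = 0
    by simpa using key, smul_zero] at h
end
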